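/- arXiv:0712.0754 — 2 statements merged into one kernel-verified Lean document; each statement's English description precedes it below -/
import Mathlib

section
/- For a = -1, b = 2 and ε > 0, the two numbers ω_{ε,1} = π/2 - arcsin√(ε/(2+2ε)) and ω_{ε,2} = π/2 + arcsin√(ε/(2+2ε)) satisfy the characteristic equation cos(-ω) sin(2ω) = ε sin(-ω) cos(2ω), and both converge to π/2 as ε → 0⁺. -/
open Real Filter

lemma aux_tendsto :
    Tendsto (fun ε : ℝ => Real.arcsin (Real.sqrt (ε / (2 + 2 * ε))))
      (nhdsWithin 0 (Set.Ioi 0)) (nhds 0) := by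
  have hc : ContinuousAt (fun ε : ℝ => Real.arcsin (Real.sqrt (ε / (2 + 2 * ε)))) 0 := by
    apply Real.continuous_arcsin.continuousAt.comp
    apply Real.continuous_sqrt.continuousAt.comp
    exact ContinuousAt.div continuousAt_id (by fun_prop) (by norm_num)
  have h0 : Real.arcsin (Real.sqrt ((0:ℝ) / (2 + 2 * 0))) = 0 := by
    norm_num
  have := hc.continuousWithinAt (s := Set.Ioi 0)
  rw [ContinuousWithinAt] at this
  simpa [h0] using this

/-- For `a = -1`, `b = 2`, the numbers `ω_{ε,1} = π/2 - arcsin √(ε/(2+2ε))` and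
`ω_{ε,2} = π/2 + arcsin √(ε/(2+2ε))` satisfy the characteristic equation
`cos(-ω) sin(2ω) = ε sin(-ω) cos(2ω)`, and both converge to `π/2` as `ε → 0⁺`. -/
theorem stmt_2 :
    (∀ ε : ℝ, 0 < ε →
      ∀ ω : ℝ,
        (ω = Real.pi / 2 - Real.arcsin (Real.sqrt (ε / (2 + 2 * ε))) ∨
         ω = Real.pi / 2 + Real.arcsin (Real.sqrt (ε / (2 + 2 * ε)))) →
        Real.cos (-ω) * Real.sin (2 * ω) = ε * Real.sin (-ω) * Real.cos (2 * ω)) ∧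
    Tendsto (fun ε : ℝ => Real.pi / 2 - Real.arcsin (Real.sqrt (ε / (2 + 2 * ε))))
      (nhdsWithin 0 (Set.Ioi 0)) (nhds (Real.pi / 2)) ∧
    Tendsto (fun ε : ℝ => Real.pi / 2 + Real.arcsin (Real.sqrt (ε / (2 + 2 * ε))))
      (nhdsWithin 0 (Set.Ioi 0)) (nhds (Real.pi / 2)) := by
  refine ⟨?_, ?_, ?_⟩
  · intro ε hε ω hω
    set θ := Real.arcsin (Real.sqrt (ε / (2 + 2 * ε))) with hθ
    have hden : (0:ℝ) < 2 + 2 * ε := by linarith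
    have hx0 : (0:ℝ) ≤ ε / (2 + 2 * ε) := by positivity
    have hx1 : ε / (2 + 2 * ε) ≤ 1 := by
      rw [div_le_one hden]; linarith
    have hs01 : Real.sqrt (ε / (2 + 2 * ε)) ∈ Set.Icc (-1:ℝ) 1 := by
      constructor
      · linarith [Real.sqrt_nonneg (ε / (2 + 2 * ε))]
      · exact Real.sqrt_le_one.mpr hx1
    have hsin : Real.sin θ = Real.sqrt (ε / (2 + 2 * ε)) :=
      Real.sin_arcsin hs01.1 hs01.2
    have hsin2 : Real.sin θ ^ 2 = ε / (2 + 2 * ε) := by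
      rw [hsin, Real.sq_sqrt hx0]
    have h3 : Real.sin θ ^ 2 * (2 + 2 * ε) = ε := (eq_div_iff hden.ne').mp hsin2
    have pyth := Real.sin_sq_add_cos_sq θ
    rw [Real.cos_neg, Real.sin_neg]
    rcases hω with h | h <;>
      rw [h] <;>
      simp only [two_mul, Real.sin_add, Real.cos_add, Real.sin_sub, Real.cos_sub,
        Real.sin_pi_div_two, Real.cos_pi_div_two] <;>
      linear_combination Real.cos θ * h3 - ε * Real.cos θ * pyth
  · have := aux_tendsto
    have h := (tendsto_const_nhds (x := Real.pi / 2)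
      (f := nhdsWithin (0:ℝ) (Set.Ioi 0))).sub this
    simpa using h
  · have := aux_tendsto
    have h := (tendsto_const_nhds (x := Real.pi / 2)
      (f := nhdsWithin (0:ℝ) (Set.Ioi 0))).add this
    simpa using h
end

section
/- Let A be a self-adjoint operator with discrete spectrum on a Hilbert space H, and (μ, u) a quasimode with accuracy σ. Suppose the interval [μ - d, μ + d] (d > 0) contains exactly one eigenvalue λ of A and λ is simple. Then there exists a normalized eigenfunction v of A with eigenvalue λ such that ‖u - v‖ ≤ 2σ/d. -/
open scoped InnerProductSpace

section VLaux
variable {H : Type*} [NormedAddCommGroup H] [InnerProductSpace ℝ H] [CompleteSpace H]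

lemma VL_eig_orth {A : H →L[ℝ] H} (hA : IsSelfAdjoint A) {a b : ℝ} {v w : H}
    (hv : A v = a • v) (hw : A w = b • w) (hab : a ≠ b) : ⟪v, w⟫_ℝ = 0 := by
  have h := hA.isSymmetric v w
  simp only [ContinuousLinearMap.coe_coe] at h
  rw [hv, hw, real_inner_smul_left, real_inner_smul_right] at h
  have h2 : (a - b) * ⟪v, w⟫_ℝ = 0 := by rw [sub_mul, h, sub_self]
  rcases mul_eq_zero.mp h2 with h3 | h3
  · exact absurd (sub_eq_zero.mp h3) hab
  · exact h3

lemma VL_mem_spectrum {A : H →L[ℝ] H} {z : ℝ} {v : H} (hv : v ≠ 0) (h : A v = z • v) :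
    z ∈ spectrum ℝ A := by
  rw [spectrum.mem_iff]
  intro hunit
  obtain ⟨C, hC⟩ := hunit.exists_left_inv
  have h0 : (algebraMap ℝ (H →L[ℝ] H) z - A) v = 0 := by
    simp [Algebra.algebraMap_eq_smul_one, ContinuousLinearMap.sub_apply, h,
      ContinuousLinearMap.smul_apply]
  have : v = 0 := by
    have h1 := congrArg (fun (D : H →L[ℝ] H) => D v) hC
    simpa [ContinuousLinearMap.mul_apply, h0] using h1.symm
  exact hv this

lemma VL_norm_sum_sq (F : Finset ℝ) (f : ℝ → H)
    (horth : ∀ z ∈ F, ∀ z' ∈ F, z ≠ z' → ⟪f z, f z'⟫_ℝ = 0) :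
    ‖∑ z ∈ F, f z‖ ^ 2 = ∑ z ∈ F, ‖f z‖ ^ 2 := by
  have key : ∀ z ∈ F, ⟪f z, ∑ z' ∈ F, f z'⟫_ℝ = ‖f z‖ ^ 2 := by
    intro z hz
    rw [inner_sum, Finset.sum_eq_single z]
    · exact real_inner_self_eq_norm_sq _
    · intro b hb hbz
      exact horth z hz b hb (Ne.symm hbz)
    · intro h; exact absurd hz h
  rw [← real_inner_self_eq_norm_sq, sum_inner, Finset.sum_congr rfl key]

end VLaux

lemma VL_pos {a t d : ℝ} (hd : 0 < d) (ha : 0 ≤ a) (ht : 0 ≤ t)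
    (hpyth : a ^ 2 + t ^ 2 = 1) (htlt : t < 1) : 0 < a := by
  nlinarith

lemma VL_arith {a e t σ d : ℝ} (hσ : 0 < σ) (hd : 0 < d) (ha : 0 ≤ a) (he : 0 ≤ e)
    (ht : 0 ≤ t) (hpyth : a ^ 2 + t ^ 2 = 1) (hrd : t ≤ σ / d)
    (he2 : e ^ 2 = 2 - 2 * a) : e ≤ 2 * σ / d := by
  have hb : 0 < 2 * σ / d := by positivity
  have h1 : a ≤ 1 := by nlinarith
  have h2 : e ^ 2 ≤ 2 * t ^ 2 := by nlinarith
  have h3 : t ^ 2 ≤ (σ / d) ^ 2 := by nlinarith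
  have h4 : e ^ 2 ≤ (2 * σ / d) ^ 2 := by
    have : (2 * σ / d) ^ 2 = 4 * (σ / d) ^ 2 := by ring
    nlinarith [sq_nonneg (σ / d)]
  nlinarith [sq_nonneg (e - 2 * σ / d), sq_nonneg (e + 2 * σ / d)]
/-- Vishik–Lyusternik lemma, part 2: if `(μ, u)` is a quasimode of a
self-adjoint operator `A` with discrete spectrum (eigenvectors are complete and
every spectral point is an eigenvalue), and `[μ - d, μ + d]` contains exactly
one eigenvalue `lam` of `A`, which is simple, then there is a normalized
eigenvector `v` with `‖u - v‖ ≤ 2σ/d`. -/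
theorem stmt_13 {H : Type*} [NormedAddCommGroup H] [InnerProductSpace ℝ H]
    [CompleteSpace H] [Nontrivial H]
    (A : H →L[ℝ] H) (hA : IsSelfAdjoint A)
    (hdisc : ∀ z ∈ spectrum ℝ A, ∃ v : H, v ≠ 0 ∧ A v = z • v)
    (hcomplete : (Submodule.span ℝ {v : H | ∃ z : ℝ, A v = z • v}).topologicalClosure = ⊤)
    (μ σ d : ℝ) (hσ : 0 < σ) (hd : 0 < d)
    (u : H) (hu : ‖u‖ = 1) (hq : ‖A u - μ • u‖ ≤ σ)
    (lam : ℝ) (hlameig : ∃ v : H, v ≠ 0 ∧ A v = lam • v)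
    (hunique : ∀ z ∈ spectrum ℝ A, |z - μ| ≤ d → z = lam)
    (hin : |lam - μ| ≤ d)
    (hsimple : ∀ v w : H, v ≠ 0 → A v = lam • v → A w = lam • w → ∃ c : ℝ, w = c • v) :
    ∃ v : H, ‖v‖ = 1 ∧ A v = lam • v ∧ ‖u - v‖ ≤ 2 * σ / d := by
  classical
  by_cases hcase : d ≤ σ
  · obtain ⟨v0, hv0ne, hv0⟩ := hlameig
    have hn0 : ‖v0‖ ≠ 0 := norm_ne_zero_iff.mpr hv0ne
    refine ⟨‖v0‖⁻¹ • v0, ?_, ?_, ?_⟩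
    · rw [norm_smul, norm_inv, norm_norm, inv_mul_cancel₀ hn0]
    · rw [map_smul, hv0, smul_comm]
    · have h1 : ‖u - ‖v0‖⁻¹ • v0‖ ≤ 2 := by
        calc ‖u - ‖v0‖⁻¹ • v0‖ ≤ ‖u‖ + ‖‖v0‖⁻¹ • v0‖ := norm_sub_le _ _
          _ = 2 := by
            rw [hu, norm_smul, norm_inv, norm_norm, inv_mul_cancel₀ hn0]; norm_num
      have h2 : (2 : ℝ) ≤ 2 * σ / d := by
        rw [le_div_iff₀ hd]; nlinarith
      linarith
  push_neg at hcase
  -- main case : σ < d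
  set B : H →L[ℝ] H := A - μ • (1 : H →L[ℝ] H) with hBdef
  have hBapp : ∀ x : H, B x = A x - μ • x := by
    intro x
    simp [hBdef, ContinuousLinearMap.sub_apply, ContinuousLinearMap.smul_apply]
  set E : Submodule ℝ H := LinearMap.ker ((A - lam • (1 : H →L[ℝ] H)) : H →ₗ[ℝ] H) with hEdef
  have hmemE : ∀ x : H, x ∈ E ↔ A x = lam • x := by
    intro x
    rw [hEdef, LinearMap.mem_ker]
    constructor
    · intro h
      have h' : A x - lam • x = 0 := by
        simpa [ContinuousLinearMap.sub_apply, ContinuousLinearMap.smul_apply] using h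
      exact sub_eq_zero.mp h'
    · intro h
      simp [ContinuousLinearMap.sub_apply, ContinuousLinearMap.smul_apply, h]
  have hEclosed : IsClosed (E : Set H) := ContinuousLinearMap.isClosed_ker (A - lam • (1 : H →L[ℝ] H))
  set S : Set H := {v : H | ∃ z : ℝ, z ≠ lam ∧ A v = z • v} with hSdef
  set V : Submodule ℝ H := Submodule.span ℝ S with hVdef
  set K : Submodule ℝ H := V.topologicalClosure with hKdef
  have hKclosed : IsClosed (K : Set H) := V.isClosed_topologicalClosure
  -- eigenvalues different from lam are far from μ
  have hfar : ∀ z : ℝ, ∀ v : H, v ≠ 0 → A v = z • v → z ≠ lam → d < |z - μ| := by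
    intro z v hvne hv hz
    by_contra h
    push_neg at h
    exact hz (hunique z (VL_mem_spectrum hvne hv) h)
  -- K is orthogonal to E
  have hVleEperp : V ≤ Eᗮ := by
    rw [hVdef, Submodule.span_le]
    intro s hs
    obtain ⟨z, hz, hsz⟩ := hs
    rw [SetLike.mem_coe, Submodule.mem_orthogonal]
    intro e he
    exact VL_eig_orth hA ((hmemE e).mp he) hsz (Ne.symm hz)
  have hKleEperp : K ≤ Eᗮ :=
    V.topologicalClosure_minimal hVleEperp E.isClosed_orthogonal
  -- B maps V into V, hence K into K
  have hBV : ∀ x ∈ V, B x ∈ V := by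
    intro x hx
    induction hx using Submodule.span_induction with
    | mem s hs =>
      obtain ⟨z, hz, hsz⟩ := hs
      have : B s = (z - μ) • s := by
        rw [hBapp, hsz, sub_smul]
      rw [this]
      exact V.smul_mem _ (Submodule.subset_span (by exact ⟨z, hz, hsz⟩))
    | zero => simpa using V.zero_mem
    | add x y hx hy ihx ihy => rw [map_add]; exact V.add_mem ihx ihy
    | smul c x hx ihx => rw [map_smul]; exact V.smul_mem _ ihx
  have hBK : ∀ x ∈ K, B x ∈ K := by
    intro x hx
    have hx' : x ∈ closure (V : Set H) := hx
    have : B x ∈ closure (V : Set H) :=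
      map_mem_closure B.continuous hx' (fun y hy => hBV y hy)
    exact this
  -- the key lower bound on V
  have hrep : ∀ x ∈ V, ∃ (F : Finset ℝ) (g : ℝ → H),
      (∀ z : ℝ, A (g z) = z • g z) ∧ (∀ z ∈ F, z ≠ lam) ∧ x = ∑ z ∈ F, g z := by
    intro x hx
    induction hx using Submodule.span_induction with
    | mem s hs =>
      obtain ⟨z, hz, hsz⟩ := hs
      refine ⟨{z}, fun w => if w = z then s else 0, ?_, ?_, ?_⟩
      · intro w
        by_cases hw : w = z
        · simp [hw, hsz]
        · simp [hw]
      · intro w hw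
        rw [Finset.mem_singleton] at hw
        rwa [hw]
      · simp
    | zero => exact ⟨∅, fun _ => 0, by simp, by simp, by simp⟩
    | add x y hx hy ihx ihy =>
      obtain ⟨F1, g1, hg1, hF1, hx1⟩ := ihx
      obtain ⟨F2, g2, hg2, hF2, hy2⟩ := ihy
      refine ⟨F1 ∪ F2,
        fun z => (if z ∈ F1 then g1 z else 0) + (if z ∈ F2 then g2 z else 0), ?_, ?_, ?_⟩
      · intro z
        by_cases h1 : z ∈ F1 <;> by_cases h2 : z ∈ F2 <;>
          simp [h1, h2, map_add, hg1 z, hg2 z, smul_add]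
      · intro z hz
        rcases Finset.mem_union.mp hz with h | h
        · exact hF1 z h
        · exact hF2 z h
      · rw [Finset.sum_add_distrib, Finset.sum_ite_mem, Finset.sum_ite_mem,
          Finset.union_inter_cancel_left, Finset.union_inter_cancel_right, hx1, hy2]
    | smul c x hx ihx =>
      obtain ⟨F, g, hg, hF, hxe⟩ := ihx
      refine ⟨F, fun z => c • g z, ?_, hF, ?_⟩
      · intro z
        rw [map_smul, hg z, smul_comm]
      · rw [hxe, Finset.smul_sum]
  have hlowV : ∀ x ∈ V, d * ‖x‖ ≤ ‖B x‖ := by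
    intro x hx
    obtain ⟨F, g, hg, hF, hxe⟩ := hrep x hx
    have horthg : ∀ z ∈ F, ∀ z' ∈ F, z ≠ z' → ⟪g z, g z'⟫_ℝ = 0 := by
      intro z _ z' _ hzz'
      exact VL_eig_orth hA (hg z) (hg z') hzz'
    have hx2 : ‖x‖ ^ 2 = ∑ z ∈ F, ‖g z‖ ^ 2 := by
      rw [hxe]; exact VL_norm_sum_sq F g horthg
    have hBx : B x = ∑ z ∈ F, (z - μ) • g z := by
      rw [hxe, map_sum]
      refine Finset.sum_congr rfl fun z _ => ?_
      rw [hBapp, hg z, sub_smul]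
    have hBx2 : ‖B x‖ ^ 2 = ∑ z ∈ F, (z - μ) ^ 2 * ‖g z‖ ^ 2 := by
      rw [hBx, VL_norm_sum_sq F (fun z => (z - μ) • g z) ?ortho]
      case ortho =>
        intro z hz z' hz' hzz'
        rw [real_inner_smul_left, real_inner_smul_right, horthg z hz z' hz' hzz']
        ring
      refine Finset.sum_congr rfl fun z _ => ?_
      rw [norm_smul, mul_pow, Real.norm_eq_abs, sq_abs]
    have hterm : ∀ z ∈ F, d ^ 2 * ‖g z‖ ^ 2 ≤ (z - μ) ^ 2 * ‖g z‖ ^ 2 := by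
      intro z hz
      by_cases hgz : g z = 0
      · simp [hgz]
      · have h1 : d < |z - μ| := hfar z (g z) hgz (hg z) (hF z hz)
        have h2 : d ^ 2 ≤ (z - μ) ^ 2 := by
          rw [← sq_abs (z - μ)]
          exact pow_le_pow_left₀ hd.le h1.le 2
        exact mul_le_mul_of_nonneg_right h2 (sq_nonneg _)
    have hsq : d ^ 2 * ‖x‖ ^ 2 ≤ ‖B x‖ ^ 2 := by
      rw [hx2, hBx2, Finset.mul_sum]
      exact Finset.sum_le_sum hterm
    nlinarith [norm_nonneg (B x), norm_nonneg x, mul_nonneg hd.le (norm_nonneg x)]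
  have hlowK : ∀ x ∈ K, d * ‖x‖ ≤ ‖B x‖ := by
    intro x hx
    have hclosed : IsClosed {y : H | d * ‖y‖ ≤ ‖B y‖} :=
      isClosed_le (continuous_const.mul continuous_norm) B.continuous.norm
    have hsub : (V : Set H) ⊆ {y : H | d * ‖y‖ ≤ ‖B y‖} := fun y hy => hlowV y hy
    exact closure_minimal hsub hclosed hx
  -- orthogonal projections
  haveI : CompleteSpace E := hEclosed.completeSpace_coe
  haveI : CompleteSpace K := hKclosed.completeSpace_coe
  set w : H := (E.orthogonalProjectionOnto u : H) with hwdef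
  set r : H := u - w with hrdef
  have hwE : w ∈ E := SetLike.coe_mem _
  have hrEp : r ∈ Eᗮ := Submodule.sub_starProjection_mem_orthogonal (K := E) u
  -- r belongs to K
  have hrK : r ∈ K := by
    set y : H := r - (K.orthogonalProjectionOnto r : H) with hydef
    have hyKp : y ∈ Kᗮ := Submodule.sub_starProjection_mem_orthogonal (K := K) r
    have hyEp : y ∈ Eᗮ := by
      apply Eᗮ.sub_mem hrEp
      exact hKleEperp (SetLike.coe_mem _)
    have hyorth : ∀ v ∈ Submodule.span ℝ {v : H | ∃ z : ℝ, A v = z • v}, ⟪v, y⟫_ℝ = 0 := by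
      intro v hv
      induction hv using Submodule.span_induction with
      | mem v hv =>
        obtain ⟨z, hvz⟩ := hv
        by_cases hz : z = lam
        · have hvE : v ∈ E := (hmemE v).mpr (by rwa [hz] at hvz)
          exact (Submodule.mem_orthogonal E y).mp hyEp v hvE
        · have hvK : v ∈ K := V.le_topologicalClosure (Submodule.subset_span ⟨z, hz, hvz⟩)
          exact (Submodule.mem_orthogonal K y).mp hyKp v hvK
      | zero => simp
      | add a b _ _ iha ihb => rw [inner_add_left, iha, ihb, add_zero]
      | smul c a _ iha => rw [real_inner_smul_left, iha, mul_zero]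
    have hymem : y ∈ (Submodule.span ℝ {v : H | ∃ z : ℝ, A v = z • v})ᗮ :=
      (Submodule.mem_orthogonal _ y).mpr hyorth
    have hbot : (Submodule.span ℝ {v : H | ∃ z : ℝ, A v = z • v})ᗮ = ⊥ :=
      Submodule.topologicalClosure_eq_top_iff.mp hcomplete
    have hy0 : y = 0 := by
      rw [hbot] at hymem
      simpa using hymem
    have : r = (K.orthogonalProjectionOnto r : H) := by
      have := sub_eq_zero.mp hy0
      exact this
    rw [this]
    exact SetLike.coe_mem _
  -- orthogonality and Pythagoras
  have hwr : ⟪w, r⟫_ℝ = 0 := (Submodule.mem_orthogonal E r).mp hrEp w hwE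
  have hdecomp : w + r = u := by rw [hrdef]; abel
  have hpyth : ‖w‖ ^ 2 + ‖r‖ ^ 2 = 1 := by
    have := norm_add_sq_real w r
    rw [hdecomp, hu, hwr] at this
    nlinarith [this]
  -- estimate ‖r‖
  have hBu : ‖B u‖ ≤ σ := by rw [hBapp]; exact hq
  have hBw : B w = (lam - μ) • w := by
    rw [hBapp, (hmemE w).mp hwE, sub_smul]
  have hBrK : B r ∈ K := hBK r hrK
  have horthB : ⟪(lam - μ) • w, B r⟫_ℝ = 0 := by
    have h1 : (lam - μ) • w ∈ E := E.smul_mem _ hwE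
    exact (Submodule.mem_orthogonal E (B r)).mp (hKleEperp hBrK) _ h1
  have hBusum : B u = (lam - μ) • w + B r := by
    rw [← hdecomp, map_add, hBw]
  have hBu2 : ‖B u‖ ^ 2 = ‖(lam - μ) • w‖ ^ 2 + ‖B r‖ ^ 2 := by
    rw [hBusum, norm_add_sq_real, horthB]; ring
  have hBrle : ‖B r‖ ≤ σ := by
    nlinarith [norm_nonneg (B r), norm_nonneg (B u), sq_nonneg ‖(lam - μ) • w‖]
  have hrle : d * ‖r‖ ≤ σ := le_trans (hlowK r hrK) hBrle
  have hrd : ‖r‖ ≤ σ / d := by rw [le_div_iff₀ hd]; linarith [hrle]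
  have hrlt1 : ‖r‖ < 1 := lt_of_le_of_lt hrd (by rw [div_lt_one hd]; exact hcase)
  -- w is nonzero
  have hwpos : 0 < ‖w‖ := VL_pos hd (norm_nonneg w) (norm_nonneg r) hpyth hrlt1
  have hwne : ‖w‖ ≠ 0 := ne_of_gt hwpos
  -- the eigenvector
  refine ⟨‖w‖⁻¹ • w, ?_, ?_, ?_⟩
  · rw [norm_smul, norm_inv, norm_norm, inv_mul_cancel₀ hwne]
  · rw [map_smul, (hmemE w).mp hwE, smul_comm]
  · have hip : ⟪u, ‖w‖⁻¹ • w⟫_ℝ = ‖w‖ := by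
      rw [← hdecomp, real_inner_smul_right, inner_add_left, real_inner_self_eq_norm_sq,
        real_inner_comm, hwr]
      field_simp
      ring
    have hnv : ‖(‖w‖⁻¹ • w)‖ = 1 := by
      rw [norm_smul, norm_inv, norm_norm, inv_mul_cancel₀ hwne]
    have husq : ‖u - ‖w‖⁻¹ • w‖ ^ 2 = 2 - 2 * ‖w‖ := by
      rw [norm_sub_sq_real, hip, hnv, hu]; ring
    exact VL_arith hσ hd (norm_nonneg w) (norm_nonneg (u - ‖w‖⁻¹ • w)) (norm_nonneg r)
      hpyth hrd husq
end
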